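/- Let n ≥ 6 with n ≡ 0 (mod 3) and let σ₁, …, σ_n be the T_2(n) list of sequences over A = {1, 2, …, n}. Let k be an integer with 3 < k < n−2 and k ≡ 2 (mod 3), and assume the list σ₁, …, σ_{k−2} is forward complete. Then every ρ ∈ [A]_k with last element ρ[k] = n is a subsequence of the concatenation σ₁σ₂⋯σ_{k−1}. -/

import Mathlib

/-- `ρ ∈ [A]_k`: a sequence over `A` of length `k` with pairwise distinct elements. -/
def DistinctSeq (A : Finset ℕ) (k : ℕ) (ρ : List ℕ) : Prop :=
  ρ.length = k ∧ ρ.Nodup ∧ ∀ a ∈ ρ, a ∈ A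

/-- `σ` is `k`-complete over `A`: every member of `[A]_k` is a subsequence of `σ`. -/
def IsKComplete (A : Finset ℕ) (k : ℕ) (σ : List ℕ) : Prop :=
  ∀ ρ : List ℕ, DistinctSeq A k ρ → ρ.Sublist σ

/-- `σ` is a supersequence over `A`: it contains every permutation of `A` as a
subsequence, i.e. it is `|A|`-complete. -/
def IsSupersequence (A : Finset ℕ) (σ : List ℕ) : Prop :=
  IsKComplete A A.card σ

/-- A list of sequences `σ₁, …, σ_n` is forward complete if for every `1 ≤ k ≤ n`,
the concatenation `σ₁σ₂⋯σ_k` is `k`-complete. -/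
def ForwardComplete (A : Finset ℕ) (L : List (List ℕ)) : Prop :=
  ∀ k, 1 ≤ k → k ≤ L.length → IsKComplete A k ((L.take k).flatten)

/-- A list of sequences `σ₁, …, σ_n` is backward complete if for every `1 ≤ k ≤ n`,
the concatenation `σ_{n-k+1}⋯σ_n` is `k`-complete. -/
def BackwardComplete (A : Finset ℕ) (L : List (List ℕ)) : Prop :=
  ∀ k, 1 ≤ k → k ≤ L.length → IsKComplete A k ((L.drop (L.length - k)).flatten)

/-- Strongly complete: both forward and backward complete. -/
def StronglyComplete (A : Finset ℕ) (L : List (List ℕ)) : Prop :=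
  ForwardComplete A L ∧ BackwardComplete A L

/-- The `T₁(n)` sequences (1-indexed): `T1 n k` is the `k`-th sequence `σ_k`.
`σ₁ = ⟨1,…,n⟩`, `σ₂ = ⟨1,…,n-1⟩`, for `2 < k < n`,
`σ_k = σ_{k-2}[-1] · σ_{k-1}[1,-2]`, and `σ_n = σ_{n-2}[-1] · σ_{n-1}[1,-1]`. -/
def T1 (n : ℕ) : ℕ → List ℕ
  | 0 => []
  | 1 => List.range' 1 n
  | 2 => List.range' 1 (n-1)
  | (k+3) =>
      (T1 n (k+1)).getLastD 0 ::
        (if k + 3 = n then T1 n (k+2) else (T1 n (k+2)).dropLast)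

/-- The `T₁(n)` list of sequences `σ₁, σ₂, …, σ_n`. -/
def T1List (n : ℕ) : List (List ℕ) := (List.range n).map (fun i => T1 n (i+1))

/-- The `T₂(n)` sequences (1-indexed): `T2 n k` is the `k`-th sequence `σ_k`,
for `n ≥ 6`, `n ≡ 0 (mod 3)`, following Definition 9 of the paper. -/
def T2 (n : ℕ) : ℕ → List ℕ
  | 0 => []
  | 1 => T1 n 1
  | 2 => T1 n 2
  | 3 => T1 n 3
  | (k+4) =>
      let K := k+4
      let p := T2 n (k+3)  -- σ_{K-1}
      let q := T2 n (k+2)  -- σ_{K-2}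
      let l := p.length
      if K = n then
        -- σ_n = σ_{n-2}[-1] · σ_{n-1}[1,-1]
        q.getLastD 0 :: p
      else if K = n-1 then
        -- σ_{n-1} = σ_{n-3}[-1] · σ_{n-2}[1,-2]
        q.getLastD 0 :: p.dropLast
      else if K = n-2 then
        -- σ_{n-2} = σ_{n-4}[-1] · σ_{n-3}[1] · σ_{n-3}[3,-2] · n
        q.getLastD 0 :: p.headD 0 :: (p.dropLast.drop 2 ++ [n])
      else if K % 3 = 1 then
        if K = 4 then
          -- σ₄ = σ₂[-1] · σ₃[2,-3] · n · σ₃[-2]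
          q.getLastD 0 :: ((p.take (l-2)).drop 1 ++ [n, p.dropLast.getLastD 0])
        else
          -- σ_k = σ_{k-2}[-1] · σ_{k-1}[1] · σ_{k-1}[3,-3] · n · σ_{k-1}[-2]
          q.getLastD 0 :: p.headD 0 :: ((p.take (l-2)).drop 2 ++ [n, p.dropLast.getLastD 0])
      else if K % 3 = 2 then
        -- σ_k = σ_{k-2}[-1] · σ_{k-1}[1,-3]
        q.getLastD 0 :: p.take (l-2)
      else
        -- σ_k = σ_{k-2}[-1] · n · σ_{k-1}[1,-2]
        q.getLastD 0 :: n :: p.dropLast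

/-- The `T₂(n)` list of sequences `σ₁, σ₂, …, σ_n`. -/
def T2List (n : ℕ) : List (List ℕ) := (List.range n).map (fun i => T2 n (i+1))

namespace T2P
open List

lemma range'_getLastD (s m d : ℕ) (h : 1 ≤ m) : (List.range' s m).getLastD d = s + m - 1 := by
  obtain ⟨t, rfl⟩ : ∃ t, m = t + 1 := ⟨m - 1, by omega⟩
  rw [List.range'_1_concat, List.getLastD_concat]; omega

lemma range'_dropLast (s m : ℕ) (h : 1 ≤ m) : (List.range' s m).dropLast = List.range' s (m-1) := by
  obtain ⟨t, rfl⟩ : ∃ t, m = t + 1 := ⟨m - 1, by omega⟩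
  rw [List.range'_1_concat, List.dropLast_concat]; simp

lemma getLastD_append (l₁ l₂ : List ℕ) (d : ℕ) (h : l₂ ≠ []) :
    (l₁ ++ l₂).getLastD d = l₂.getLastD d := by
  induction l₁ generalizing d with
  | nil => rfl
  | cons a l ih =>
      rw [List.cons_append, List.getLastD_cons, ih]
      cases l₂ with
      | nil => exact absurd rfl h
      | cons b t => rw [List.getLastD_cons, List.getLastD_cons]

def cf (n j : ℕ) : List ℕ :=
  if j = 1 then List.range' 1 n
  else if j = 3 then n :: List.range' 1 (n-2)
  else if j % 3 = 1 then
    List.range' (n+3-j) (j-3) ++ List.range' 1 (n-j) ++ [n, n+1-j]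
  else if j % 3 = 2 then List.range' (n+3-j) (j-3) ++ List.range' 1 (n+1-j)
  else (n+3-j) :: n :: (List.range' (n+4-j) (j-4) ++ List.range' 1 (n+1-j))

lemma cf_getLastD (n j : ℕ) (h1 : 1 ≤ j) (h : j + 5 ≤ n) :
    (cf n j).getLastD 0 = n + 1 - j := by
  unfold cf
  split_ifs with he1 he3 hm1 hm2
  · subst he1; rw [range'_getLastD _ _ _ (by omega)]; omega
  · subst he3; rw [List.getLastD_cons, range'_getLastD _ _ _ (by omega)]; omega
  · rw [getLastD_append _ _ _ (by simp)]; rfl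
  · rw [getLastD_append _ _ _ (by simp; omega), range'_getLastD _ _ _ (by omega)]; omega
  · rw [List.getLastD_cons, List.getLastD_cons,
      getLastD_append _ _ _ (by simp; omega), range'_getLastD _ _ _ (by omega)]; omega

end T2P
namespace T2P
open List

lemma take_sub2 (X : List ℕ) (u v : ℕ) :
    ((X ++ [u,v]).take ((X ++ [u,v]).length - 2)) = X := by
  have h : (X ++ [u,v]).length - 2 = X.length := by simp
  rw [h, List.take_left]

lemma dropLast_last2 (X : List ℕ) (u v : ℕ) :
    ((X ++ [u,v]).dropLast).getLastD 0 = u := by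
  rw [show X ++ [u,v] = (X ++ [u]) ++ [v] from by simp, List.dropLast_concat,
    List.getLastD_concat]

lemma range'_split1 (c d : ℕ) (h : c = d+1) : List.range' 1 c = List.range' 1 d ++ [c] := by
  subst h; rw [List.range'_1_concat]; simp [Nat.add_comm]

lemma range'_split2 (c d : ℕ) (h : c = d+2) :
    List.range' 1 c = List.range' 1 d ++ [d+1, c] := by
  subst h
  rw [show d+2 = (d+1)+1 from rfl, List.range'_1_concat, List.range'_1_concat]
  simp [Nat.add_comm]

lemma range'_cons1 (s c s1 : ℕ) (h1 : s1 = s+1) :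
    List.range' s (c+1) = s :: List.range' s1 c := by
  subst h1; rw [List.range'_succ]

lemma range'_cons2 (s c s1 s2 : ℕ) (h1 : s1 = s+1) (h2 : s2 = s+2) :
    List.range' s (c+2) = s :: s1 :: List.range' s2 c := by
  subst h1; subst h2
  rw [show c+2 = (c+1)+1 from rfl, List.range'_succ, List.range'_succ]

lemma T2_eq_cf (n : ℕ) : ∀ j, 1 ≤ j → j + 5 ≤ n → T2 n j = cf n j := by
  intro j
  induction j using Nat.strong_induction_on with
  | _ j IH =>
  match j, IH with
  | 0, _ => intro h0 _; exact absurd h0 (by omega)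
  | 1, _ => intro _ h; rfl
  | 2, _ =>
      intro _ h
      show T1 n 2 = cf n 2
      unfold cf
      rw [if_neg (by omega), if_neg (by omega), if_neg (by omega), if_pos (by omega)]
      simp [T1, show (2:ℕ) - 3 = 0 from rfl, show n + 1 - 2 = n - 1 from by omega]
  | 3, _ =>
      intro _ h
      show T1 n (0+3) = cf n 3
      simp only [T1]
      rw [if_neg (by omega : ¬ (0:ℕ)+3 = n)]
      rw [range'_getLastD _ _ _ (by omega), range'_dropLast _ _ (by omega)]
      unfold cf
      rw [if_neg (by omega), if_pos rfl]
      rw [show 1 + n - 1 = n from by omega, show n - 1 - 1 = n - 2 from by omega]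
  | (m+4), IH =>
      intro _ h
      obtain ⟨a, rfl⟩ : ∃ a, n = m+9+a := ⟨n-(m+9), by omega⟩
      have ih3 := IH (m+3) (by omega) (by omega) (by omega)
      have ih2 := IH (m+2) (by omega) (by omega) (by omega)
      simp only [T2]
      rw [if_neg (by omega : ¬ m+4 = m+9+a), if_neg (by omega : ¬ m+4 = m+9+a-1),
          if_neg (by omega : ¬ m+4 = m+9+a-2)]
      rw [ih3, ih2, cf_getLastD (m+9+a) (m+2) (by omega) (by omega)]
      have hdisj : m = 0 ∨ (∃ t, m = 3*t+3) ∨ (∃ t, m = 3*t+1) ∨ (∃ t, m = 3*t+2) := by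
        rcases (show m % 3 = 0 ∨ m % 3 = 1 ∨ m % 3 = 2 by omega) with h3 | h3 | h3
        · rcases Nat.eq_zero_or_pos m with rfl | hpos
          · exact Or.inl rfl
          · exact Or.inr (Or.inl ⟨m/3 - 1, by omega⟩)
        · exact Or.inr (Or.inr (Or.inl ⟨m/3, by omega⟩))
        · exact Or.inr (Or.inr (Or.inr ⟨m/3, by omega⟩))
      rcases hdisj with rfl | ⟨t, rfl⟩ | ⟨t, rfl⟩ | ⟨t, rfl⟩
      · -- K = 4
        rw [if_pos (by omega : (0+4) % 3 = 1), if_pos rfl]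
        have hp : cf (0+9+a) (0+3) = ((9+a) :: List.range' 1 (5+a)) ++ [6+a, 7+a] := by
          unfold cf
          rw [if_neg (by omega), if_pos rfl, show 0+9+a-2 = 7+a from by omega,
            show 0+9+a = 9+a from by omega, range'_split2 (7+a) (5+a) (by omega)]
          try simp
          all_goals omega
        rw [hp, take_sub2, dropLast_last2, List.drop_succ_cons, List.drop_zero]
        unfold cf
        rw [if_neg (by omega), if_neg (by omega), if_pos (by omega)]
        rw [show 0+9+a+3-(0+4) = 8+a from by omega, show 0+4-3 = 1 from by omega,
          show 0+9+a-(0+4) = 5+a from by omega, show 0+9+a+1-(0+4) = 6+a from by omega,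
          show 0+9+a+1-(0+2) = 8+a from by omega, show (0:ℕ)+9+a = 9+a from by omega]
        simp
      · -- K = 3t+7, K%3=1, K>4
        rw [if_pos (by omega : (3*t+3+4) % 3 = 1), if_neg (by omega : ¬ 3*t+3+4 = 4)]
        have hp : cf (3*t+3+9+a) (3*t+3+3) =
            ((a+9) :: (3*t+12+a) :: (List.range' (a+10) (3*t+2) ++ List.range' 1 (a+5)))
              ++ [a+6, a+7] := by
          unfold cf
          rw [if_neg (by omega), if_neg (by omega), if_neg (by omega), if_neg (by omega)]
          rw [show 3*t+3+9+a+3-(3*t+3+3) = a+9 from by omega,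
            show 3*t+3+9+a+4-(3*t+3+3) = a+10 from by omega,
            show 3*t+3+3-4 = 3*t+2 from by omega,
            show 3*t+3+9+a+1-(3*t+3+3) = a+7 from by omega,
            show 3*t+3+9+a = 3*t+12+a from by omega,
            range'_split2 (a+7) (a+5) (by omega)]
          try simp
          all_goals omega
        have hhead : (((a+9) :: (3*t+12+a) :: (List.range' (a+10) (3*t+2) ++ List.range' 1 (a+5)))
              ++ [a+6, a+7]).headD 0 = a+9 := rfl
        rw [hp, take_sub2, dropLast_last2, hhead, List.drop_succ_cons, List.drop_succ_cons,
          List.drop_zero]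
        unfold cf
        rw [if_neg (by omega), if_neg (by omega), if_pos (by omega)]
        rw [show 3*t+3+9+a+3-(3*t+3+4) = a+8 from by omega,
          show 3*t+3+4-3 = 3*t+4 from by omega,
          show 3*t+3+9+a-(3*t+3+4) = a+5 from by omega,
          show 3*t+3+9+a+1-(3*t+3+4) = a+6 from by omega,
          show 3*t+3+9+a+1-(3*t+3+2) = a+8 from by omega,
          show 3*t+3+9+a = 3*t+12+a from by omega]
        rw [show (3*t+4) = (3*t+2)+2 from rfl,
          range'_cons2 (a+8) (3*t+2) (a+9) (a+10) (by omega) (by omega)]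
        simp
      · -- K = 3t+5, K%3=2
        rw [if_neg (by omega : ¬ (3*t+1+4) % 3 = 1), if_pos (by omega : (3*t+1+4) % 3 = 2)]
        have hp : cf (3*t+1+9+a) (3*t+1+3) =
            (List.range' (a+9) (3*t+1) ++ List.range' 1 (a+6)) ++ [3*t+10+a, a+7] := by
          unfold cf
          rw [if_neg (by omega), if_neg (by omega), if_pos (by omega)]
          rw [show 3*t+1+9+a+3-(3*t+1+3) = a+9 from by omega,
            show 3*t+1+3-3 = 3*t+1 from by omega,
            show 3*t+1+9+a-(3*t+1+3) = a+6 from by omega,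
            show 3*t+1+9+a+1-(3*t+1+3) = a+7 from by omega,
            show 3*t+1+9+a = 3*t+10+a from by omega]
          try simp
          all_goals omega
        rw [hp, take_sub2]
        unfold cf
        rw [if_neg (by omega), if_neg (by omega), if_neg (by omega), if_pos (by omega)]
        rw [show 3*t+1+9+a+3-(3*t+1+4) = a+8 from by omega,
          show 3*t+1+4-3 = 3*t+1+1 from by omega,
          show 3*t+1+9+a+1-(3*t+1+4) = a+6 from by omega,
          show 3*t+1+9+a+1-(3*t+1+2) = a+8 from by omega]
        rw [range'_cons1 (a+8) (3*t+1) (a+9) (by omega)]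
        simp
      · -- K = 3t+6, K%3=0
        rw [if_neg (by omega : ¬ (3*t+2+4) % 3 = 1), if_neg (by omega : ¬ (3*t+2+4) % 3 = 2)]
        have hp : cf (3*t+2+9+a) (3*t+2+3) =
            (List.range' (a+9) (3*t+2) ++ List.range' 1 (a+6)) ++ [a+7] := by
          unfold cf
          rw [if_neg (by omega), if_neg (by omega), if_neg (by omega), if_pos (by omega)]
          rw [show 3*t+2+9+a+3-(3*t+2+3) = a+9 from by omega,
            show 3*t+2+3-3 = 3*t+2 from by omega,
            show 3*t+2+9+a+1-(3*t+2+3) = a+7 from by omega,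
            range'_split1 (a+7) (a+6) (by omega)]
          try simp
          all_goals omega
        rw [hp, List.dropLast_concat]
        unfold cf
        rw [if_neg (by omega), if_neg (by omega), if_neg (by omega), if_neg (by omega)]
        rw [show 3*t+2+9+a+3-(3*t+2+4) = a+8 from by omega,
          show 3*t+2+9+a+4-(3*t+2+4) = a+9 from by omega,
          show 3*t+2+4-4 = 3*t+2 from by omega,
          show 3*t+2+9+a+1-(3*t+2+4) = a+6 from by omega,
          show 3*t+2+9+a+1-(3*t+2+2) = a+8 from by omega]

end T2P
namespace T2P
open List

lemma T2_decomp (n j : ℕ) (h1 : 1 ≤ j) (h : j + 5 ≤ n) :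
    ∃ V T, T2 n j = V ++ (n-j) :: T ∧ (∀ b ∈ T, b = n ∨ b = n+1-j) ∧
      (¬(j % 3 = 1 ∧ 2 ≤ j) → T = [n+1-j]) := by
  rw [T2_eq_cf n j h1 h]
  unfold cf
  split_ifs with he1 he3 hm1 hm2
  · subst he1
    refine ⟨List.range' 1 (n-2), [n], ?_, by intro b hb; simp at hb; omega,
      fun _ => by rw [show n+1-1 = n from by omega]⟩
    rw [range'_split2 n (n-2) (by omega), show n-2+1 = n-1 from by omega]
    try simp
  · subst he3
    refine ⟨n :: List.range' 1 (n-4), [n-2], ?_, by intro b hb; simp at hb; omega,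
      fun _ => by rw [show n+1-3 = n-2 from by omega]⟩
    rw [range'_split2 (n-2) (n-4) (by omega), show n-4+1 = n-3 from by omega]
    simp
  · refine ⟨List.range' (n+3-j) (j-3) ++ List.range' 1 (n-j-1), [n, n+1-j], ?_,
      by intro b hb; simp at hb; omega, fun hc => absurd ⟨hm1, by omega⟩ hc⟩
    rw [range'_split1 (n-j) (n-j-1) (by omega)]
    simp
  · refine ⟨List.range' (n+3-j) (j-3) ++ List.range' 1 (n-j-1), [n+1-j], ?_,
      by intro b hb; simp at hb; omega, fun _ => rfl⟩
    rw [range'_split2 (n+1-j) (n-j-1) (by omega), show n-j-1+1 = n-j from by omega]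
    simp
  · refine ⟨(n+3-j) :: n :: List.range' (n+4-j) (j-4) ++ List.range' 1 (n-j-1), [n+1-j], ?_,
      by intro b hb; simp at hb; omega, fun _ => rfl⟩
    rw [range'_split2 (n+1-j) (n-j-1) (by omega), show n-j-1+1 = n-j from by omega]
    simp

def FL (n j : ℕ) : List ℕ := ((T2List n).take j).flatten

def sfx (n k j : ℕ) : List ℕ := (((T2List n).take (k-1)).drop j).flatten

lemma FL_succ (n j : ℕ) (h : j < n) : FL n (j+1) = FL n j ++ T2 n (j+1) := by
  unfold FL
  rw [List.take_succ]
  have hg : (T2List n)[j]? = some (T2 n (j+1)) := by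
    rw [List.getElem?_eq_getElem (by simp [T2List]; omega)]
    simp [T2List]
  rw [hg]
  simp

lemma FL_sfx (n k j : ℕ) (hj : j ≤ k-1) (hk : k-1 ≤ n) :
    FL n j ++ sfx n k j = FL n (k-1) := by
  unfold FL sfx
  have h1 : (T2List n).take j = ((T2List n).take (k-1)).take j := by
    rw [List.take_take, Nat.min_eq_left hj]
  rw [h1, ← List.flatten_append, List.take_append_drop]

lemma sfx_cons (n k j : ℕ) (hj : j < k-1) (hk : k-1 ≤ n) :
    sfx n k j = T2 n (j+1) ++ sfx n k (j+1) := by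
  unfold sfx
  rw [List.drop_eq_getElem_cons (by simp [T2List]; omega)]
  rw [List.flatten_cons]
  congr 1
  simp [T2List]

lemma complete_j (n k : ℕ) (hk : k-2 ≤ n)
    (hfc : ForwardComplete (Finset.Icc 1 n) ((T2List n).take (k-2)))
    (j : ℕ) (h1 : 1 ≤ j) (h2 : j ≤ k-2) :
    IsKComplete (Finset.Icc 1 n) j (FL n j) := by
  have hlen : ((T2List n).take (k-2)).length = k-2 := by
    simp [T2List]; omega
  have h := hfc j h1 (by omega)
  unfold FL
  rwa [List.take_take, Nat.min_eq_left h2] at h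

def chain (n k j : ℕ) : List ℕ :=
  (List.range' (j+1) (k-1-j)).map (fun i => n+1-i) ++ [n]

lemma chain_last (n k : ℕ) : chain n k (k-1) = [n] := by
  unfold chain
  rw [show k-1-(k-1) = 0 from by omega]
  simp

lemma chain_cons (n k j : ℕ) (h1 : 1 ≤ j) (h : j ≤ k-2) :
    chain n k j = (n-j) :: chain n k (j+1) := by
  unfold chain
  rw [show k-1-j = (k-2-j)+1 from by omega, List.range'_succ, List.map_cons,
    show n+1-(j+1) = n-j from by omega, show k-1-(j+1) = k-2-j from by omega]
  rfl

lemma T2_km1 (n k : ℕ) (hk5 : 5 ≤ k) (hkn : k+4 ≤ n) (hk3 : k % 3 = 2) :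
    T2 n (k-1) = (List.range' (n+3-(k-1)) (k-1-3) ++ List.range' 1 (n-(k-1)))
      ++ [n, n+1-(k-1)] := by
  rw [T2_eq_cf n (k-1) (by omega) (by omega)]
  unfold cf
  rw [if_neg (by omega), if_neg (by omega), if_pos (by omega)]
  try simp

lemma chain_sub (n k : ℕ) (hk5 : 5 ≤ k) (hkn : k+4 ≤ n) (hk3 : k % 3 = 2) :
    ∀ d j, 1 ≤ j → j ≤ k-2 → k-2-j = d → (chain n k (j+1)).Sublist (sfx n k j) := by
  intro d
  induction d with
  | zero =>
      intro j hj1 hj2 hd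
      have hj : j = k-2 := by omega
      subst hj
      rw [show k-2+1 = k-1 from by omega, chain_last n k]
      rw [sfx_cons n k (k-2) (by omega) (by omega), show k-2+1 = k-1 from by omega]
      have hn : n ∈ T2 n (k-1) := by
        rw [T2_km1 n k hk5 hkn hk3]; simp
      exact (List.singleton_sublist.mpr hn).trans (List.sublist_append_left _ _)
  | succ d ih =>
      intro j hj1 hj2 hd
      rw [chain_cons n k (j+1) (by omega) (by omega)]
      rw [sfx_cons n k j (by omega) (by omega)]
      obtain ⟨V, T, hVT, -, -⟩ := T2_decomp n (j+1) (by omega) (by omega)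
      rw [hVT]
      have h1 : chain n k (j+2) <+ sfx n k (j+1) :=
        (show j+1+1 = j+2 from rfl) ▸ ih (j+1) (by omega) (by omega) (by omega)
      calc (n-(j+1)) :: chain n k (j+2)
          <+ (n-(j+1)) :: (T ++ sfx n k (j+1)) :=
            List.Sublist.cons₂ _ (h1.trans (List.sublist_append_right T _))
        _ <+ V ++ ((n-(j+1)) :: (T ++ sfx n k (j+1))) := List.sublist_append_right V _
        _ = (V ++ (n-(j+1)) :: T) ++ sfx n k (j+1) := by simp

lemma rec_main (n k : ℕ) (hk5 : 5 ≤ k) (hkn : k+4 ≤ n) (hk3 : k % 3 = 2)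
    (hfc : ForwardComplete (Finset.Icc 1 n) ((T2List n).take (k-2))) :
    ∀ j, 1 ≤ j → j ≤ k-2 → ∀ δ : List ℕ, δ.length = j → δ.Nodup →
      (∀ a ∈ δ, a ∈ Finset.Icc 1 n) → (∀ i, j+1 ≤ i → i ≤ k-1 → (n+1-i) ∉ δ) →
      n ∉ δ → (δ ++ chain n k j).Sublist (FL n (k-1)) := by
  intro j
  induction j using Nat.strong_induction_on with
  | _ j IH =>
  intro hj1 hj2 δ hlen hnd hmem hexc hnmem
  have hsub : δ.Sublist (FL n j) :=
    complete_j n k (by omega) hfc j hj1 hj2 δ ⟨hlen, hnd, hmem⟩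
  obtain ⟨V, T, hVT, hTmem, hTval⟩ := T2_decomp n j hj1 (by omega)
  have hF : FL n j = (FL n (j-1) ++ V) ++ ((n-j) :: T) := by
    have h := FL_succ n (j-1) (by omega)
    rw [show j-1+1 = j from by omega] at h
    rw [h, hVT, List.append_assoc]
  rw [hF] at hsub
  obtain ⟨δ₁, δ₂, hδ, hs1, hs2⟩ := List.sublist_append_iff.mp hsub
  subst hδ
  have hδ₂ : ∀ b ∈ δ₂, b = n+1-j := by
    intro b hb
    have hbδ : b ∈ δ₁ ++ δ₂ := List.mem_append_right _ hb
    rcases List.mem_cons.mp (hs2.subset hb) with h | h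
    · exact absurd (h ▸ hbδ)
        (by have := hexc (j+1) (by omega) (by omega)
            rwa [show n+1-(j+1) = n-j from by omega] at this)
    · rcases hTmem b h with rfl | rfl
      · exact absurd hbδ hnmem
      · rfl
  have hchainF : ∀ γ : List ℕ, γ <+ FL n (j-1) ++ V →
      (γ ++ chain n k j).Sublist (FL n (k-1)) := by
    intro γ hγ
    have hchain : chain n k j <+ (n-j) :: (T ++ sfx n k j) := by
      rw [chain_cons n k j hj1 hj2]
      exact List.Sublist.cons₂ _
        ((chain_sub n k hk5 hkn hk3 (k-2-j) j hj1 hj2 rfl).trans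
          (List.sublist_append_right T _))
    have h2 := List.Sublist.append hγ hchain
    have hR : (FL n (j-1) ++ V) ++ ((n-j) :: (T ++ sfx n k j)) = FL n (k-1) := by
      rw [← FL_sfx n k j (by omega) (by omega), hF]
      simp
    rwa [hR] at h2
  rcases δ₂ with _ | ⟨c, δ₂'⟩
  · rw [List.append_nil]
    rw [List.append_nil] at hlen hnd hmem hexc hnmem
    exact hchainF δ₁ hs1
  · have hc : c = n+1-j := hδ₂ c (by simp)
    rcases δ₂' with _ | ⟨c2, δ₂''⟩
    swap
    · exfalso
      have hc2 : c2 = n+1-j := hδ₂ c2 (by simp)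
      have hnd2 : (c :: c2 :: δ₂'').Nodup :=
        (List.sublist_append_right δ₁ _).nodup hnd
      have : c ≠ c2 := by
        have := List.nodup_cons.mp hnd2
        intro hq; exact this.1 (by rw [hq]; simp)
      omega
    · -- δ₂ = [c], c = n+1-j
      have hj2' : 2 ≤ j := by
        rcases Nat.lt_or_ge j 2 with h' | h'
        · exfalso
          have hj1' : j = 1 := by omega
          have : c = n := by omega
          exact hnmem (by rw [← this]; exact List.mem_append_right _ (by simp))
        · exact h'
      have hcd : c ∉ δ₁ := by
        have := (List.nodup_append'.mp hnd).2.2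
        intro hin; exact this hin (by simp)
      have hIH := IH (j-1) (by omega) (by omega) (by omega) δ₁
        (by simp at hlen; omega)
        ((List.sublist_append_left δ₁ _).nodup hnd)
        (fun a ha => hmem a (List.mem_append_left _ ha))
        (by
          intro i hi1 hi2
          rcases Nat.eq_or_lt_of_le hi1 with heq | hlt
          · rw [show n+1-i = c from by omega]
            exact hcd
          · intro hin
            exact hexc i (by omega) hi2 (List.mem_append_left _ hin))
        (fun hin => hnmem (List.mem_append_left _ hin))
      have hch : chain n k (j-1) = c :: chain n k j := by
        rw [chain_cons n k (j-1) (by omega) (by omega),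
          show (j-1)+1 = j from by omega, show n-(j-1) = c from by omega]
      rw [List.append_assoc, show ([c] ++ chain n k j : List ℕ) = chain n k (j-1) from by
        rw [hch]; rfl]
      exact hIH

end T2P
/-- Let `n ≥ 6`, `n ≡ 0 (mod 3)`, and let `σ₁,…,σ_n` be the `T₂(n)`
list over `A = {1,…,n}`. Let `3 < k < n-2` with `k ≡ 2 (mod 3)` and assume
`σ₁,…,σ_{k-2}` is forward complete. Then every `ρ ∈ [A]_k` with last element `n`
is a subsequence of `σ₁σ₂⋯σ_{k-1}`. -/
theorem T2_last_n_sublist (n : ℕ) (hn : 6 ≤ n) (hn3 : n % 3 = 0)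
    (k : ℕ) (hk1 : 3 < k) (hk2 : k < n - 2) (hk3 : k % 3 = 2)
    (hfc : ForwardComplete (Finset.Icc 1 n) ((T2List n).take (k-2)))
    (ρ : List ℕ) (hρ : DistinctSeq (Finset.Icc 1 n) k ρ)
    (hlast : ρ.getLastD 0 = n) :
    ρ.Sublist (((T2List n).take (k-1)).flatten) := by
  classical
  obtain ⟨hlen, hnd, hmemA⟩ := hρ
  have hk5 : 5 ≤ k := by omega
  have hkn : k + 4 ≤ n := by omega
  rcases List.eq_nil_or_concat ρ with rfl | ⟨ρ₁, b, rfl⟩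
  · simp at hlen; omega
  rw [List.concat_eq_append] at hlen hnd hmemA hlast ⊢
  rw [List.getLastD_concat] at hlast
  subst b
  rcases List.eq_nil_or_concat ρ₁ with rfl | ⟨ρ₂, x, rfl⟩
  · simp at hlen; omega
  rw [List.concat_eq_append] at hlen hnd hmemA ⊢
  -- basic facts
  have hlen₂ : ρ₂.length = k - 2 := by simp at hlen; omega
  have hnd1 : (ρ₂ ++ [x]).Nodup := (List.nodup_append.mp hnd).1
  have hnρ : n ∉ ρ₂ ++ [x] := fun hin => (List.nodup_append'.mp hnd).2.2 hin (by simp)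
  have hxn : x ≠ n := fun h => hnρ (by rw [← h]; exact List.mem_append_right _ (by simp))
  have hnρ₂ : n ∉ ρ₂ := fun hin => hnρ (List.mem_append_left _ hin)
  have hxρ₂ : x ∉ ρ₂ := fun hin => (List.nodup_append'.mp hnd1).2.2 hin (by simp)
  have hnd₂ : ρ₂.Nodup := (List.nodup_append.mp hnd1).1
  have hmem₂ : ∀ a ∈ ρ₂, a ∈ Finset.Icc 1 n := fun a ha =>
    hmemA a (List.mem_append_left _ (List.mem_append_left _ ha))
  have hx_mem : x ∈ Finset.Icc 1 n :=
    hmemA x (List.mem_append_left _ (List.mem_append_right _ (by simp)))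
  have hx_bounds : 1 ≤ x ∧ x ≤ n := by simpa using hx_mem
  show ((ρ₂ ++ [x]) ++ [n]).Sublist (T2P.FL n (k-1))
  by_cases hx1 : x = n+1-(k-1)
  · -- x = e_{k-1} : use the recursion lemma
    have hexc : ∀ i, (k-2)+1 ≤ i → i ≤ k-1 → (n+1-i) ∉ ρ₂ := by
      intro i h1 h2
      rw [show i = k-1 from by omega, ← hx1]
      exact hxρ₂
    have h := T2P.rec_main n k hk5 hkn hk3 hfc (k-2) (by omega) le_rfl ρ₂
      hlen₂ hnd₂ hmem₂ hexc hnρ₂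
    have hch : T2P.chain n k (k-2) = [x, n] := by
      unfold T2P.chain
      rw [show k-1-(k-2) = 1 from by omega, show k-2+1 = k-1 from by omega,
        List.range'_one]
      simp [hx1]
    rw [hch] at h
    simpa using h
  · by_cases hx2 : x = n+1-(k-2)
    · -- x = e_{k-2} : matched at the end of σ_{k-2}
      have hsub : ρ₂.Sublist (T2P.FL n (k-2)) :=
        T2P.complete_j n k (by omega) hfc (k-2) (by omega) le_rfl ρ₂ ⟨hlen₂, hnd₂, hmem₂⟩
      obtain ⟨V, T, hVT, hTmem, hTval⟩ := T2P.T2_decomp n (k-2) (by omega) (by omega)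
      have hT : T = [n+1-(k-2)] := hTval (by omega)
      have hF : T2P.FL n (k-2) = (T2P.FL n (k-3) ++ (V ++ [n-(k-2)])) ++ [x] := by
        have h := T2P.FL_succ n (k-3) (by omega)
        rw [show k-3+1 = k-2 from by omega] at h
        rw [h, hVT, hT, ← hx2]
        simp
      rw [hF] at hsub
      obtain ⟨δ₁, δ₂, hδ, hs1, hs2⟩ := List.sublist_append_iff.mp hsub
      have hδ₂ : δ₂ = [] := by
        rcases δ₂ with _ | ⟨c, δ'⟩
        · rfl
        · exfalso
          have : c = x := by simpa using hs2.subset (by simp : c ∈ c :: δ')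
          exact hxρ₂ (by rw [← this] at hxρ₂ ⊢; rw [hδ]; exact List.mem_append_right _ (by simp))
      subst hδ₂
      rw [List.append_nil] at hδ
      subst hδ
      have hn_sub : List.Sublist [n] (T2P.sfx n k (k-2)) := by
        rw [T2P.sfx_cons n k (k-2) (by omega) (by omega), show k-2+1 = k-1 from by omega]
        refine (List.singleton_sublist.mpr ?_).trans (List.sublist_append_left _ _)
        rw [T2P.T2_km1 n k hk5 hkn hk3]; simp
      have h := List.Sublist.append (List.Sublist.append hs1 (List.Sublist.refl [x])) hn_sub
      have hR : (((T2P.FL n (k-3) ++ (V ++ [n-(k-2)])) ++ [x]) ++ T2P.sfx n k (k-2))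
          = T2P.FL n (k-1) := by
        rw [← T2P.FL_sfx n k (k-2) (by omega) (by omega), hF]
      rwa [hR] at h
    · -- generic x : found in the prefix of σ_{k-1}
      have hsub : ρ₂.Sublist (T2P.FL n (k-2)) :=
        T2P.complete_j n k (by omega) hfc (k-2) (by omega) le_rfl ρ₂ ⟨hlen₂, hnd₂, hmem₂⟩
      have hxm : x ∈ List.range' (n+3-(k-1)) (k-1-3) ++ List.range' 1 (n-(k-1)) := by
        rcases Nat.lt_or_ge x (n-(k-1)+1) with h' | h'
        · exact List.mem_append_right _ (List.mem_range'.mpr ⟨x-1, by omega, by omega⟩)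
        · refine List.mem_append_left _ (List.mem_range'.mpr ⟨x-(n+3-(k-1)), by omega, by omega⟩)
      have hxn_sub : List.Sublist ([x] ++ [n]) ((List.range' (n+3-(k-1)) (k-1-3) ++ List.range' 1 (n-(k-1)))
          ++ [n, n+1-(k-1)]) := by
        refine List.Sublist.append (List.singleton_sublist.mpr hxm) ?_
        simp
      have h := List.Sublist.append hsub hxn_sub
      have hR : T2P.FL n (k-2) ++ ((List.range' (n+3-(k-1)) (k-1-3) ++ List.range' 1 (n-(k-1)))
          ++ [n, n+1-(k-1)]) = T2P.FL n (k-1) := by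
        rw [← T2P.T2_km1 n k hk5 hkn hk3]
        have hs := T2P.FL_succ n (k-2) (by omega)
        rw [show k-2+1 = k-1 from by omega] at hs
        rw [hs]
      rw [hR] at h
      rw [List.append_assoc]
      exact h
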